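/- Let E be a complex Banach algebra, n₀ a positive integer, r ∈ (0, 1/2) and θ ∈ [0,∞). Suppose f : E → E satisfies f(0) = 0, ‖D_λ f(x,y)‖ ≤ θ·‖x·y‖^r for all x, y ∈ E and all λ ∈ T¹_{1/n₀}, ‖f(xy) − f(y)f(x)‖ ≤ θ·‖x·y‖^r for all x, y ∈ E, and for every x ∈ E the limits below exist and satisfy lim_{m→∞} 2^{−m} f(2^m · lim_{n→∞} 2^{−n} f(2^n x)) = x. Then f itself is an involution on E. -/

import Mathlib

open Filter Topology

/-- `D_λ f (x, y) = 2 conj(λ) f((x+y)/2) - f(λx) - f(λy)`. -/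
noncomputable def jensenDiff {E : Type*} [NormedRing E] [NormedAlgebra ℂ E]
    (f : E → E) (l : ℂ) (x y : E) : E :=
  (2 * (starRingEnd ℂ) l) • f ((2 : ℂ)⁻¹ • (x + y)) - f (l • x) - f (l • y)

/-- The arc `T¹_{1/n₀} = {e^{iθ} : 0 ≤ θ ≤ 1/n₀}` of the unit circle. -/
def unitArc (n₀ : ℕ) : Set ℂ :=
  {l : ℂ | ∃ θ : ℝ, 0 ≤ θ ∧ θ ≤ 1 / (n₀ : ℝ) ∧ l = Complex.exp (θ * Complex.I)}

/-- An involution on a complex algebra: conjugate-linear, anti-multiplicative,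
and an involution of order two. -/
def IsInvolution {E : Type*} [NormedRing E] [NormedAlgebra ℂ E] (I : E → E) : Prop :=
  (∀ (x y : E) (l m : ℂ),
      I (l • x + m • y) = (starRingEnd ℂ) l • I x + (starRingEnd ℂ) m • I y) ∧
  (∀ x y : E, I (x * y) = I y * I x) ∧
  (∀ x : E, I (I x) = x)

private lemma aux_tendsto_zero {E : Type*} [SeminormedAddCommGroup E] {g : ℕ → E} {C a : ℝ}
    (ha0 : 0 ≤ a) (ha1 : a < 1) (h : ∀ n, ‖g n‖ ≤ C * a ^ n) :
    Tendsto g atTop (𝓝 0) := by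
  have h2 : Tendsto (fun n : ℕ => C * a ^ n) atTop (𝓝 (C * 0)) :=
    (tendsto_pow_atTop_nhds_zero_of_lt_one ha0 ha1).const_mul C
  rw [mul_zero] at h2
  exact squeeze_zero_norm h h2

private lemma rpow_pow_aux {b : ℝ} (hb : 0 ≤ b) (r : ℝ) (n : ℕ) :
    (b ^ n) ^ r = (b ^ r) ^ n := by
  rw [← Real.rpow_natCast b n, ← Real.rpow_natCast (b ^ r) n, ← Real.rpow_mul hb,
    ← Real.rpow_mul hb, mul_comm]

private lemma conj_exp_aux (ψ : ℝ) :
    (starRingEnd ℂ) (Complex.exp ((ψ : ℂ) * Complex.I)) = Complex.exp (((-ψ : ℝ) : ℂ) * Complex.I) := by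
  rw [← Complex.exp_conj]
  congr 1
  rw [map_mul, Complex.conj_ofReal, Complex.conj_I]
  push_cast
  ring

private lemma norm_exp_aux (ψ : ℝ) : ‖Complex.exp ((ψ : ℂ) * Complex.I)‖ = 1 := by
  exact Complex.norm_exp_ofReal_mul_I ψ

theorem superstability_involution_direct {E : Type*} [NormedRing E] [NormedAlgebra ℂ E] [CompleteSpace E]
    (n₀ : ℕ) (hn₀ : 0 < n₀) (r : ℝ) (hr0 : 0 < r) (hr : r < 1 / 2)
    (θ : ℝ) (hθ : 0 ≤ θ)
    (f : E → E) (hf0 : f 0 = 0)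
    (hD : ∀ x y : E, ∀ l ∈ unitArc n₀, ‖jensenDiff f l x y‖ ≤ θ * ‖x * y‖ ^ r)
    (hmul : ∀ x y : E, ‖f (x * y) - f y * f x‖ ≤ θ * ‖x * y‖ ^ r)
    (hlim : ∀ x : E, ∃ y : E,
      Tendsto (fun n : ℕ => ((2 : ℂ) ^ n)⁻¹ • f ((2 : ℂ) ^ n • x)) atTop (𝓝 y) ∧
      Tendsto (fun m : ℕ => ((2 : ℂ) ^ m)⁻¹ • f ((2 : ℂ) ^ m • y)) atTop (𝓝 x)) :
    IsInvolution f := by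
  choose T hT1 hT2 using hlim
  -- basic scalar facts
  have h4r1 : (4:ℝ) ^ r / 2 < 1 := by
    have h1 : (4:ℝ) ^ r < (4:ℝ) ^ ((1:ℝ)/2) := (Real.rpow_lt_rpow_left_iff (by norm_num)).mpr hr
    have h2 : (4:ℝ) ^ ((1:ℝ)/2) = 2 := by
      rw [show (4:ℝ) = 2 ^ (2:ℕ) by norm_num, ← Real.rpow_natCast 2 2,
        ← Real.rpow_mul (by norm_num : (0:ℝ) ≤ 2)]
      norm_num
    linarith
  have h4r0 : (0:ℝ) ≤ (4:ℝ) ^ r / 2 := by positivity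
  have h2r1 : (2:ℝ) ^ r / 2 < 1 := by
    have h1 : (2:ℝ) ^ r < (2:ℝ) ^ (1:ℝ) := (Real.rpow_lt_rpow_left_iff (by norm_num)).mpr (by linarith)
    rw [Real.rpow_one] at h1
    linarith
  have h2r0 : (0:ℝ) ≤ (2:ℝ) ^ r / 2 := by positivity
  have h4r4 : (4:ℝ) ^ r / 4 < 1 := by
    have h1 : (4:ℝ) ^ r < (4:ℝ) ^ (1:ℝ) := (Real.rpow_lt_rpow_left_iff (by norm_num)).mpr (by linarith)
    rw [Real.rpow_one] at h1
    linarith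
  have h4r40 : (0:ℝ) ≤ (4:ℝ) ^ r / 4 := by positivity
  have hTT : ∀ x, T (T x) = x := fun x => tendsto_nhds_unique (hT1 (T x)) (hT2 x)
  have hT0 : T 0 = 0 := by
    refine tendsto_nhds_unique (hT1 0) ?_
    simpa [hf0] using (tendsto_const_nhds : Tendsto (fun _ : ℕ => (0:E)) atTop (𝓝 0))
  have harc1 : (1:ℂ) ∈ unitArc n₀ := ⟨0, le_refl 0, by positivity, by simp⟩
  -- norm facts about scaled products
  have h2c : ‖(2:ℂ)‖ = 2 := by
    norm_num
  have hnp : ∀ (x y : E) (n : ℕ), ‖((2:ℂ)^n • x) * ((2:ℂ)^n • y)‖ = (4:ℝ)^n * ‖x * y‖ := by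
    intro x y n
    rw [smul_mul_smul_comm, norm_smul, norm_mul, norm_pow, h2c, ← mul_pow]
    norm_num
  -- Jensen equation for T
  have hJ : ∀ (x y : E), ∀ l ∈ unitArc n₀,
      (2 * (starRingEnd ℂ) l) • T ((2:ℂ)⁻¹ • (x + y)) = T (l • x) + T (l • y) := by
    intro x y l hl
    set z := (2:ℂ)⁻¹ • (x + y) with hz
    have key : ∀ n : ℕ, ((2:ℂ)^n)⁻¹ • jensenDiff f l ((2:ℂ)^n • x) ((2:ℂ)^n • y)
        = (2 * (starRingEnd ℂ) l) • (((2:ℂ)^n)⁻¹ • f ((2:ℂ)^n • z))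
          - ((2:ℂ)^n)⁻¹ • f ((2:ℂ)^n • (l • x)) - ((2:ℂ)^n)⁻¹ • f ((2:ℂ)^n • (l • y)) := by
      intro n
      have e1 : (2:ℂ)⁻¹ • ((2:ℂ)^n • x + (2:ℂ)^n • y) = (2:ℂ)^n • z := by
        rw [hz]; module
      have e2 : l • ((2:ℂ)^n • x) = (2:ℂ)^n • (l • x) := smul_comm _ _ _
      have e3 : l • ((2:ℂ)^n • y) = (2:ℂ)^n • (l • y) := smul_comm _ _ _
      rw [jensenDiff, e1, e2, e3]
      module
    have hg0 : Tendsto (fun n : ℕ => ((2:ℂ)^n)⁻¹ • jensenDiff f l ((2:ℂ)^n • x) ((2:ℂ)^n • y))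
        atTop (𝓝 0) := by
      refine aux_tendsto_zero (C := θ * ‖x * y‖ ^ r) h4r0 h4r1 ?_
      intro n
      rw [norm_smul]
      have hb := hD ((2:ℂ)^n • x) ((2:ℂ)^n • y) l hl
      rw [hnp x y n, Real.mul_rpow (by positivity) (norm_nonneg _),
        rpow_pow_aux (by norm_num : (0:ℝ) ≤ 4)] at hb
      have hnrm : ‖((2:ℂ)^n)⁻¹‖ = ((2:ℝ)^n)⁻¹ := by
        rw [norm_inv, norm_pow, h2c]
      rw [hnrm]
      calc ((2:ℝ)^n)⁻¹ * ‖jensenDiff f l ((2:ℂ)^n • x) ((2:ℂ)^n • y)‖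
          ≤ ((2:ℝ)^n)⁻¹ * (θ * (((4:ℝ)^r)^n * ‖x * y‖ ^ r)) := by gcongr
        _ = θ * ‖x * y‖ ^ r * ((4:ℝ)^r / 2)^n := by
            rw [div_pow]
            have : ((2:ℝ)^n) ≠ 0 := by positivity
            field_simp
    have hgl : Tendsto (fun n : ℕ => ((2:ℂ)^n)⁻¹ • jensenDiff f l ((2:ℂ)^n • x) ((2:ℂ)^n • y))
        atTop (𝓝 ((2 * (starRingEnd ℂ) l) • T z - T (l • x) - T (l • y))) := by
      simp only [key]
      exact (((hT1 z).const_smul _).sub (hT1 (l • x))).sub (hT1 (l • y))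
    have h0 := tendsto_nhds_unique hgl hg0
    rw [sub_sub, sub_eq_zero] at h0
    exact h0
  -- additivity
  have hTadd : ∀ x y : E, T (x + y) = T x + T y := by
    intro x y
    have h1 := hJ x y 1 harc1
    have h2 := hJ (x + y) 0 1 harc1
    simp only [map_one, mul_one, one_smul, add_zero, hT0] at h1 h2
    rw [← h2, h1]
  -- homogeneity on the arc
  have hTarc : ∀ (x : E), ∀ l ∈ unitArc n₀, T (l • x) = (starRingEnd ℂ) l • T x := by
    intro x l hl
    have h1 := hJ x x l hl
    have e : (2:ℂ)⁻¹ • (x + x) = x := by module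
    rw [e] at h1
    have h2 : (2:ℂ) • T (l • x) = (2:ℂ) • ((starRingEnd ℂ) l • T x) := by
      rw [two_smul, ← h1, smul_smul]
    have h3 := congrArg (fun w => (2:ℂ)⁻¹ • w) h2
    simpa [smul_smul] using h3
  -- exp homogeneity for all nonneg angles
  have hexp : ∀ (ψ : ℝ), 0 ≤ ψ → ∀ (x : E),
      T (Complex.exp ((ψ:ℂ) * Complex.I) • x)
        = (starRingEnd ℂ) (Complex.exp ((ψ:ℂ) * Complex.I)) • T x := by
    have main : ∀ k : ℕ, ∀ ψ : ℝ, 0 ≤ ψ → ψ ≤ k / n₀ → ∀ x : E,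
        T (Complex.exp ((ψ:ℂ) * Complex.I) • x)
          = (starRingEnd ℂ) (Complex.exp ((ψ:ℂ) * Complex.I)) • T x := by
      intro k
      induction k with
      | zero =>
          intro ψ h0 h1 x
          have hψ : ψ = 0 := le_antisymm (by simpa using h1) h0
          subst hψ
          simp
      | succ k ih =>
          intro ψ h0 h1 x
          by_cases hle : ψ ≤ 1 / n₀
          · exact hTarc x _ ⟨ψ, h0, hle, rfl⟩
          · push_neg at hle
            have hn0' : (0:ℝ) < n₀ := by exact_mod_cast hn₀
            have hd0 : (0:ℝ) < 1 / n₀ := by positivity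
            have h2 : ψ - 1 / n₀ ≤ k / n₀ := by
              have e : ((k:ℝ) + 1) / n₀ = k / n₀ + 1 / n₀ := by ring
              push_cast at h1
              linarith
            have e : Complex.exp ((ψ:ℂ) * Complex.I)
                = Complex.exp (((1 / n₀ : ℝ) : ℂ) * Complex.I)
                  * Complex.exp (((ψ - 1 / n₀ : ℝ) : ℂ) * Complex.I) := by
              rw [← Complex.exp_add]
              congr 1
              push_cast
              ring
            rw [e, mul_smul, hTarc _ _ ⟨1 / n₀, le_of_lt hd0, le_refl _, rfl⟩,
              ih _ (by linarith) h2, smul_smul, ← map_mul]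
    intro ψ h0 x
    obtain ⟨k, hk⟩ := exists_nat_ge (ψ * n₀)
    have hn0' : (0:ℝ) < n₀ := by exact_mod_cast hn₀
    exact main k ψ h0 ((le_div_iff₀ hn0').mpr hk) x
  -- unit-circle homogeneity
  have hTunit : ∀ (x : E) (u : ℂ), ‖u‖ = 1 → T (u • x) = (starRingEnd ℂ) u • T x := by
    intro x u hu
    have habs1 : ‖u‖ = 1 := hu
    by_cases h : 0 ≤ u.arg
    · have h1 : u = Complex.exp ((u.arg : ℂ) * Complex.I) := by
        conv_lhs => rw [← Complex.norm_mul_exp_arg_mul_I u]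
        rw [habs1, Complex.ofReal_one, one_mul]
      rw [h1]
      exact hexp u.arg h x
    · push_neg at h
      have h2 : u = Complex.exp (((u.arg + 2 * Real.pi : ℝ) : ℂ) * Complex.I) := by
        have e : Complex.exp (((u.arg + 2 * Real.pi : ℝ) : ℂ) * Complex.I)
            = Complex.exp ((u.arg : ℂ) * Complex.I) * Complex.exp (2 * (Real.pi:ℂ) * Complex.I) := by
          rw [← Complex.exp_add]
          congr 1
          push_cast
          ring
        rw [e, Complex.exp_two_pi_mul_I, mul_one]
        conv_lhs => rw [← Complex.norm_mul_exp_arg_mul_I u]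
        rw [habs1, Complex.ofReal_one, one_mul]
      have hpos : 0 ≤ u.arg + 2 * Real.pi := by
        have h5 := Complex.neg_pi_lt_arg u
        have h6 := Real.pi_pos
        linarith
      rw [h2]
      exact hexp _ hpos x
  -- natural-number homogeneity
  have hTnat : ∀ (x : E) (n : ℕ), T ((n:ℂ) • x) = (n:ℂ) • T x := by
    intro x n
    induction n with
    | zero => simpa using hT0
    | succ n ih =>
        have e : (((n:ℕ)+1 : ℕ):ℂ) • x = (n:ℂ) • x + x := by
          push_cast
          rw [add_smul, one_smul]
        rw [e, hTadd, ih]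
        push_cast
        rw [add_smul, one_smul]
  -- real homogeneity
  have hTreal : ∀ (x : E) (t : ℝ), T ((t:ℂ) • x) = (t:ℂ) • T x := by
    have small : ∀ (x : E) (t : ℝ), -1 ≤ t → t ≤ 1 →
        T (((2*t:ℝ):ℂ) • x) = ((2*t:ℝ):ℂ) • T x := by
      intro x t h1 h2
      set φ := Real.arccos t with hφ
      have hcos : Real.cos φ = t := Real.cos_arccos h1 h2
      have key : Complex.exp ((φ:ℂ) * Complex.I) + Complex.exp (((-φ:ℝ):ℂ) * Complex.I)
          = ((2*t:ℝ):ℂ) := by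
        push_cast
        rw [Complex.exp_mul_I, Complex.exp_mul_I, Complex.cos_neg, Complex.sin_neg,
          ← hcos, Complex.ofReal_cos]
        ring
      have hx : ((2*t:ℝ):ℂ) • x
          = Complex.exp ((φ:ℂ) * Complex.I) • x + Complex.exp (((-φ:ℝ):ℂ) * Complex.I) • x := by
        rw [← add_smul, key]
      rw [hx, hTadd, hTunit x _ (norm_exp_aux φ), hTunit x _ (norm_exp_aux (-φ)),
        conj_exp_aux, conj_exp_aux, ← add_smul]
      congr 1
      rw [show (-(-φ):ℝ) = φ by ring, add_comm]
      exact key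
    have small1 : ∀ (x : E) (s : ℝ), -1 ≤ s → s ≤ 1 → T ((s:ℂ) • x) = (s:ℂ) • T x := by
      intro x s h1 h2
      have h3 := small x (s/2) (by linarith) (by linarith)
      rwa [show 2*(s/2) = s by ring] at h3
    intro x t
    obtain ⟨n, hn⟩ := exists_nat_ge |t|
    set m : ℕ := n + 1 with hm
    have hm0 : (0:ℝ) < (m:ℝ) := by positivity
    have hmt : |t| ≤ (m:ℝ) := le_trans hn (by rw [hm]; push_cast; linarith)
    set s : ℝ := t / (m:ℝ) with hs
    have hb := abs_le.mp (by rw [hs, abs_div, abs_of_pos hm0]; exact (div_le_one hm0).mpr hmt :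
      |s| ≤ 1)
    have hmC : ((m:ℕ):ℂ) ≠ 0 := Nat.cast_ne_zero.mpr (by omega)
    have hsm : ((m:ℕ):ℂ) * ((s:ℝ):ℂ) = ((t:ℝ):ℂ) := by
      rw [hs]
      push_cast
      rw [mul_comm, div_mul_cancel₀ _ hmC]
    have e : ((t:ℝ):ℂ) • x = (m:ℂ) • (((s:ℝ):ℂ) • x) := by
      rw [smul_smul, hsm]
    rw [e, hTnat, small1 x s hb.1 hb.2, smul_smul, hsm]
  -- full conjugate homogeneity
  have hTsmul : ∀ (x : E) (l : ℂ), T (l • x) = (starRingEnd ℂ) l • T x := by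
    intro x l
    rcases eq_or_ne l 0 with rfl | hl
    · simp [hT0]
    · have hnorm : (0:ℝ) < ‖l‖ := norm_pos_iff.mpr hl
      have hcne : ((‖l‖:ℝ):ℂ) ≠ 0 := by exact_mod_cast hnorm.ne'
      obtain ⟨u, hu1, h6⟩ : ∃ u : ℂ, ‖u‖ = 1 ∧ ((‖l‖:ℝ):ℂ) * u = l := by
        refine ⟨((‖l‖:ℝ):ℂ)⁻¹ * l, ?_, ?_⟩
        · rw [norm_mul, norm_inv, Complex.norm_real, Real.norm_eq_abs, abs_of_pos hnorm]
          exact inv_mul_cancel₀ hnorm.ne'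
        · rw [← mul_assoc, mul_inv_cancel₀ hcne, one_mul]
      have hcl : (starRingEnd ℂ) l = ((‖l‖:ℝ):ℂ) * (starRingEnd ℂ) u := by
        conv_lhs => rw [← h6]
        rw [map_mul, Complex.conj_ofReal]
      calc T (l • x) = T ((((‖l‖:ℝ):ℂ) * u) • x) := by rw [h6]
        _ = T (((‖l‖:ℝ):ℂ) • (u • x)) := by rw [mul_smul]
        _ = ((‖l‖:ℝ):ℂ) • T (u • x) := hTreal (u • x) ‖l‖
        _ = ((‖l‖:ℝ):ℂ) • ((starRingEnd ℂ) u • T x) := by rw [hTunit x u hu1]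
        _ = (((‖l‖:ℝ):ℂ) * (starRingEnd ℂ) u) • T x := by rw [smul_smul]
        _ = (starRingEnd ℂ) l • T x := by rw [hcl]
  -- subsequence limit
  have hT4 : ∀ z : E, Tendsto (fun n : ℕ => ((2:ℂ)^(2*n))⁻¹ • f ((2:ℂ)^(2*n) • z))
      atTop (𝓝 (T z)) := by
    intro z
    exact (hT1 z).comp (Filter.tendsto_atTop_atTop.mpr fun b => ⟨b, fun a ha => by omega⟩)
  -- anti-multiplicativity of T
  have hTmul : ∀ x y : E, T (x * y) = T y * T x := by
    intro x y
    have key : ∀ n : ℕ, ((2:ℂ)^(2*n))⁻¹ • f ((2:ℂ)^(2*n) • (x*y))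
        - (((2:ℂ)^n)⁻¹ • f ((2:ℂ)^n • y)) * (((2:ℂ)^n)⁻¹ • f ((2:ℂ)^n • x))
        = ((2:ℂ)^(2*n))⁻¹ • (f (((2:ℂ)^n • x) * ((2:ℂ)^n • y))
            - f ((2:ℂ)^n • y) * f ((2:ℂ)^n • x)) := by
      intro n
      have e1 : ((2:ℂ)^n • x) * ((2:ℂ)^n • y) = (2:ℂ)^(2*n) • (x*y) := by
        rw [smul_mul_smul_comm, ← pow_add, two_mul]
      rw [e1, smul_sub]
      congr 1
      rw [smul_mul_smul_comm, ← mul_inv, ← pow_add, two_mul]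
    have hb2 : ∀ n : ℕ, ‖((2:ℂ)^(2*n))⁻¹ • f ((2:ℂ)^(2*n) • (x*y))
        - (((2:ℂ)^n)⁻¹ • f ((2:ℂ)^n • y)) * (((2:ℂ)^n)⁻¹ • f ((2:ℂ)^n • x))‖
        ≤ θ * ‖x*y‖^r * ((4:ℝ)^r/4)^n := by
      intro n
      rw [key n, norm_smul]
      have hb := hmul ((2:ℂ)^n • x) ((2:ℂ)^n • y)
      rw [hnp x y n, Real.mul_rpow (by positivity) (norm_nonneg _),
        rpow_pow_aux (by norm_num : (0:ℝ) ≤ 4)] at hb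
      have hnrm : ‖((2:ℂ)^(2*n))⁻¹‖ = ((4:ℝ)^n)⁻¹ := by
        rw [norm_inv, norm_pow, h2c, pow_mul]
        norm_num
      rw [hnrm]
      calc ((4:ℝ)^n)⁻¹ * ‖f (((2:ℂ)^n • x) * ((2:ℂ)^n • y)) - f ((2:ℂ)^n • y) * f ((2:ℂ)^n • x)‖
          ≤ ((4:ℝ)^n)⁻¹ * (θ * (((4:ℝ)^r)^n * ‖x * y‖ ^ r)) := by gcongr
        _ = θ * ‖x * y‖ ^ r * ((4:ℝ)^r / 4)^n := by
            rw [div_pow]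
            have h4 : ((4:ℝ)^n) ≠ 0 := by positivity
            field_simp
    have hg0 := aux_tendsto_zero h4r40 h4r4 hb2
    have hgl : Tendsto (fun n : ℕ => ((2:ℂ)^(2*n))⁻¹ • f ((2:ℂ)^(2*n) • (x*y))
        - (((2:ℂ)^n)⁻¹ • f ((2:ℂ)^n • y)) * (((2:ℂ)^n)⁻¹ • f ((2:ℂ)^n • x)))
        atTop (𝓝 (T (x*y) - T y * T x)) :=
      (hT4 (x*y)).sub ((hT1 y).mul (hT1 x))
    have h0 := tendsto_nhds_unique hgl hg0
    rwa [sub_eq_zero] at h0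
  -- T (x*y) = T y * f x
  have hTy : ∀ x y : E, T (x * y) = T y * f x := by
    intro x y
    have key : ∀ n : ℕ, ((2:ℂ)^n)⁻¹ • f ((2:ℂ)^n • (x*y))
        - (((2:ℂ)^n)⁻¹ • f ((2:ℂ)^n • y)) * f x
        = ((2:ℂ)^n)⁻¹ • (f (x * ((2:ℂ)^n • y)) - f ((2:ℂ)^n • y) * f x) := by
      intro n
      have e1 : x * ((2:ℂ)^n • y) = (2:ℂ)^n • (x*y) := mul_smul_comm _ _ _
      rw [e1, smul_sub, smul_mul_assoc]
    have hb2 : ∀ n : ℕ, ‖((2:ℂ)^n)⁻¹ • f ((2:ℂ)^n • (x*y))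
        - (((2:ℂ)^n)⁻¹ • f ((2:ℂ)^n • y)) * f x‖
        ≤ θ * ‖x*y‖^r * ((2:ℝ)^r/2)^n := by
      intro n
      rw [key n, norm_smul]
      have hb := hmul x ((2:ℂ)^n • y)
      have e2 : ‖x * ((2:ℂ)^n • y)‖ = (2:ℝ)^n * ‖x * y‖ := by
        rw [mul_smul_comm, norm_smul, norm_pow, h2c]
      rw [e2, Real.mul_rpow (by positivity) (norm_nonneg _),
        rpow_pow_aux (by norm_num : (0:ℝ) ≤ 2)] at hb
      have hnrm : ‖((2:ℂ)^n)⁻¹‖ = ((2:ℝ)^n)⁻¹ := by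
        rw [norm_inv, norm_pow, h2c]
      rw [hnrm]
      calc ((2:ℝ)^n)⁻¹ * ‖f (x * ((2:ℂ)^n • y)) - f ((2:ℂ)^n • y) * f x‖
          ≤ ((2:ℝ)^n)⁻¹ * (θ * (((2:ℝ)^r)^n * ‖x * y‖ ^ r)) := by gcongr
        _ = θ * ‖x * y‖ ^ r * ((2:ℝ)^r / 2)^n := by
            rw [div_pow]
            have h4 : ((2:ℝ)^n) ≠ 0 := by positivity
            field_simp
    have hg0 := aux_tendsto_zero h2r0 h2r1 hb2
    have hgl : Tendsto (fun n : ℕ => ((2:ℂ)^n)⁻¹ • f ((2:ℂ)^n • (x*y))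
        - (((2:ℂ)^n)⁻¹ • f ((2:ℂ)^n • y)) * f x)
        atTop (𝓝 (T (x*y) - T y * f x)) :=
      (hT1 (x*y)).sub ((hT1 y).mul tendsto_const_nhds)
    have h0 := tendsto_nhds_unique hgl hg0
    rwa [sub_eq_zero] at h0
  -- f = T
  have hfeq : ∀ x : E, f x = T x := by
    intro x
    have h1 := hTy x (T 1)
    have h2 := hTmul x (T 1)
    rw [hTT 1, one_mul] at h1 h2
    rw [← h1, h2]
  refine ⟨?_, ?_, ?_⟩
  · intro x y l m
    rw [hfeq, hfeq, hfeq, hTadd, hTsmul, hTsmul]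
  · intro x y
    rw [hfeq, hfeq, hfeq, hTmul]
  · intro x
    rw [hfeq, hfeq, hTT]
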